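/- Let 0 < p < 1, k ≥ 2 an integer, and (ρ_j)_{j≥1} a nonincreasing nonnegative sequence in ℓ^p with all ρ_j < 1 for j large. Then ∑ over multi-indices ν supported on {j : j > s} with every nonzero entry ν_j ≥ 2 and 2 ≤ |ν| ≤ k, of ρ^ν, is bounded by −1 + ∏_{j>s} (1 + ρ_j² (1−ρ_j^{k−1})/(1−ρ_j)), which is O(s^{−2/p+1}) as s → ∞. -/

import Mathlib

open Filter Asymptotics


lemma geom_aux (k : ℕ) (x : ℝ) (hx1 : x < 1) :
    ∑ n ∈ insert 0 (Finset.Icc 2 k), x ^ n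
      = 1 + x ^ 2 * (1 - x ^ (k - 1)) / (1 - x) := by
  have hx : x ≠ 1 := ne_of_lt hx1
  rw [Finset.sum_insert (by simp), pow_zero]
  congr 1
  have h0 : Finset.Icc 2 k = Finset.Ico 2 (k + 1) := by rw [Finset.Ico_add_one_right_eq_Icc]
  rw [h0, Finset.sum_Ico_eq_sum_range]
  have h1 : ∀ i ∈ Finset.range (k + 1 - 2), x ^ (2 + i) = x ^ 2 * x ^ i := by
    intro i _; rw [pow_add]
  rw [Finset.sum_congr rfl h1, ← Finset.mul_sum, geom_sum_eq hx]
  have h2 : k + 1 - 2 = k - 1 := by omega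
  rw [h2, mul_div_assoc]
  congr 1
  rw [← neg_sub (x ^ (k-1)) 1, ← neg_sub x 1, neg_div_neg_eq]

lemma gv_eq (k : ℕ) (x : ℝ) (hx1 : x < 1) :
    x ^ 2 * (1 - x ^ (k - 1)) / (1 - x) = ∑ n ∈ Finset.Icc 2 k, x ^ n := by
  have h := geom_aux k x hx1
  rw [Finset.sum_insert (by simp), pow_zero] at h
  linarith

lemma gv_nonneg (k : ℕ) (x : ℝ) (hx0 : 0 ≤ x) (hx1 : x < 1) :
    0 ≤ x ^ 2 * (1 - x ^ (k - 1)) / (1 - x) := by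
  rw [gv_eq k x hx1]
  exact Finset.sum_nonneg fun n _ => pow_nonneg hx0 n

lemma gv_le (k : ℕ) (x : ℝ) (hx0 : 0 ≤ x) (hx1 : x < 1) :
    x ^ 2 * (1 - x ^ (k - 1)) / (1 - x) ≤ ((k - 1 : ℕ) : ℝ) * x ^ 2 := by
  rw [gv_eq k x hx1]
  calc ∑ n ∈ Finset.Icc 2 k, x ^ n ≤ ∑ n ∈ Finset.Icc 2 k, x ^ 2 :=
        Finset.sum_le_sum fun n hn =>
          pow_le_pow_of_le_one hx0 hx1.le (Finset.mem_Icc.mp hn).1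
    _ = ((k - 1 : ℕ) : ℝ) * x ^ 2 := by
        have h3 : k + 1 - 2 = k - 1 := by omega
        rw [Finset.sum_const, Nat.card_Icc, h3, nsmul_eq_mul]

lemma exp_sub_one_le (x : ℝ) (hx : 0 ≤ x) : Real.exp x - 1 ≤ x * Real.exp x := by
  have h1 : -x + 1 ≤ Real.exp (-x) := Real.add_one_le_exp (-x)
  have h2 : Real.exp (-x) * Real.exp x = 1 := by
    rw [← Real.exp_add]; simp
  nlinarith [Real.exp_pos x]

lemma box_sum_le (ρ : ℕ → ℝ) (hnn : ∀ j, 0 ≤ ρ j) (k s M : ℕ) (F : Finset (ℕ →₀ ℕ))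
    (hF : ∀ ν ∈ F, (∀ j, ν j ≠ 0 → j ∈ Finset.Ioc s (s + M)) ∧
      (∀ j, ν j = 0 ∨ (2 ≤ ν j ∧ ν j ≤ k)) ∧ ν ≠ 0) :
    ∑ ν ∈ F, ν.prod (fun j n => ρ j ^ n)
      ≤ (∏ j ∈ Finset.Ioc s (s + M), ∑ n ∈ insert 0 (Finset.Icc 2 k), ρ j ^ n) - 1 := by
  classical
  set A := Finset.Ioc s (s + M) with hA
  set T : Finset ℕ := insert 0 (Finset.Icc 2 k) with hT
  set w : ((a : ℕ) → a ∈ A → ℕ) → ℝ := fun p => ∏ x ∈ A.attach, ρ x.1 ^ (p x.1 x.2) with hw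
  have hexp : ∏ j ∈ A, ∑ n ∈ T, ρ j ^ n = ∑ p ∈ A.pi (fun _ => T), w p :=
    Finset.prod_sum A _ (fun a n => ρ a ^ n)
  set φ : (ℕ →₀ ℕ) → ((a : ℕ) → a ∈ A → ℕ) := fun ν a _ => ν a with hφ
  have hinj : ∀ ν ∈ F, ∀ μ ∈ F, φ ν = φ μ → ν = μ := by
    intro ν hν μ hμ h
    ext j
    by_cases hj : j ∈ A
    · exact congrFun (congrFun h j) hj
    · have h1 : ν j = 0 := by by_contra hc; exact hj ((hF ν hν).1 j hc)
      have h2 : μ j = 0 := by by_contra hc; exact hj ((hF μ hμ).1 j hc)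
      rw [h1, h2]
  have himg : ∀ ν ∈ F, φ ν ∈ A.pi (fun _ => T) := by
    intro ν hν
    rw [Finset.mem_pi]
    intro a _
    rcases (hF ν hν).2.1 a with h | h
    · simp [hT, φ, h]
    · simp only [hT, φ, Finset.mem_insert, Finset.mem_Icc]
      exact Or.inr ⟨h.1, h.2⟩
  set z : (a : ℕ) → a ∈ A → ℕ := fun _ _ => 0 with hz
  have hzmem : z ∈ A.pi (fun _ => T) := by
    rw [Finset.mem_pi]; intro a _; simp [hT, hz]
  have hznot : z ∉ F.image φ := by
    rw [Finset.mem_image]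
    rintro ⟨ν, hν, hc⟩
    apply (hF ν hν).2.2
    ext j
    simp only [Finsupp.coe_zero, Pi.zero_apply]
    by_cases hj : j ∈ A
    · exact congrFun (congrFun hc j) hj
    · by_contra hcc; exact hj ((hF ν hν).1 j hcc)
  have hwnn : ∀ p, 0 ≤ w p := fun p => Finset.prod_nonneg (fun x _ => pow_nonneg (hnn x.1) _)
  have hsum_eq : ∑ p ∈ F.image φ, w p = ∑ ν ∈ F, ν.prod (fun j n => ρ j ^ n) := by
    rw [Finset.sum_image hinj]
    apply Finset.sum_congr rfl
    intro ν hν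
    have hsupp : ν.support ⊆ A := fun j hj => (hF ν hν).1 j (Finsupp.mem_support_iff.mp hj)
    rw [Finsupp.prod_of_support_subset ν hsupp _ (fun i _ => pow_zero (ρ i))]
    exact (Finset.prod_attach A fun j => ρ j ^ ν j)
  have hwz : w z = 1 := by simp [hw, hz]
  have main : w z + ∑ p ∈ F.image φ, w p ≤ ∑ p ∈ A.pi (fun _ => T), w p := by
    rw [← Finset.sum_insert hznot]
    apply Finset.sum_le_sum_of_subset_of_nonneg
    · intro p hp
      rcases Finset.mem_insert.mp hp with h | h
      · rw [h]; exact hzmem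
      · rcases Finset.mem_image.mp h with ⟨ν, hν, hc⟩; rw [← hc]; exact himg ν hν
    · intro p _ _; exact hwnn p
  rw [← hsum_eq, hexp]
  rw [hwz] at main
  linarith

lemma per_s (k : ℕ) (hk : 2 ≤ k) (ρ : ℕ → ℝ) (hnn : ∀ j, 0 ≤ ρ j)
    (s : ℕ) (hρ1 : ∀ j, s < j → ρ j < 1)
    (hsq : Summable fun i => ρ (s + 1 + i) ^ 2) :
    ((∑' ν : {ν : ℕ →₀ ℕ // (∀ j ≤ s, ν j = 0) ∧ (∀ j, ν j ≠ 1) ∧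
          2 ≤ ν.sum (fun _ n => n) ∧ ν.sum (fun _ n => n) ≤ k},
        ν.1.prod fun j n => ρ j ^ n)
      ≤ -1 + ∏' j : ℕ,
          (1 + ρ (s + 1 + j) ^ 2 * (1 - ρ (s + 1 + j) ^ (k - 1)) / (1 - ρ (s + 1 + j))))
    ∧ (∏' j : ℕ, (1 + ρ (s + 1 + j) ^ 2 * (1 - ρ (s + 1 + j) ^ (k - 1)) / (1 - ρ (s + 1 + j))))
        = Real.exp (∑' j : ℕ, Real.log
            (1 + ρ (s + 1 + j) ^ 2 * (1 - ρ (s + 1 + j) ^ (k - 1)) / (1 - ρ (s + 1 + j))))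
    ∧ 0 ≤ (∑' j : ℕ, Real.log
            (1 + ρ (s + 1 + j) ^ 2 * (1 - ρ (s + 1 + j) ^ (k - 1)) / (1 - ρ (s + 1 + j))))
    ∧ (∑' j : ℕ, Real.log
            (1 + ρ (s + 1 + j) ^ 2 * (1 - ρ (s + 1 + j) ^ (k - 1)) / (1 - ρ (s + 1 + j))))
        ≤ ∑' i : ℕ, ((k - 1 : ℕ) : ℝ) * ρ (s + 1 + i) ^ 2 := by
  classical
  set g : ℕ → ℝ := fun j => ρ j ^ 2 * (1 - ρ j ^ (k - 1)) / (1 - ρ j) with hg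
  have hgnn : ∀ j, s < j → 0 ≤ g j := fun j hj => gv_nonneg k (ρ j) (hnn j) (hρ1 j hj)
  have hgle : ∀ j, s < j → g j ≤ ((k - 1 : ℕ) : ℝ) * ρ j ^ 2 :=
    fun j hj => gv_le k (ρ j) (hnn j) (hρ1 j hj)
  have hpos : ∀ i : ℕ, 0 < 1 + g (s + 1 + i) := fun i => by
    linarith [hgnn (s + 1 + i) (by omega)]
  have hlog_nn : ∀ i : ℕ, 0 ≤ Real.log (1 + g (s + 1 + i)) := fun i =>
    Real.log_nonneg (by linarith [hgnn (s + 1 + i) (by omega)])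
  have hlog_le : ∀ i : ℕ, Real.log (1 + g (s + 1 + i)) ≤ ((k - 1 : ℕ) : ℝ) * ρ (s + 1 + i) ^ 2 := by
    intro i
    have h1 := Real.log_le_sub_one_of_pos (hpos i)
    have h2 := hgle (s + 1 + i) (by omega)
    linarith
  have hsumK : Summable fun i => ((k - 1 : ℕ) : ℝ) * ρ (s + 1 + i) ^ 2 := hsq.mul_left _
  have hlog_sum : Summable fun i => Real.log (1 + g (s + 1 + i)) :=
    Summable.of_nonneg_of_le hlog_nn hlog_le hsumK
  have hprod_eq : (∏' i : ℕ, (1 + g (s + 1 + i)))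
      = Real.exp (∑' i : ℕ, Real.log (1 + g (s + 1 + i))) := by
    have h := Real.rexp_tsum_eq_tprod (f := fun i => 1 + g (s + 1 + i))
      (fun i => hpos i) hlog_sum
    exact h.symm
  have hmult : Multipliable fun i : ℕ => 1 + g (s + 1 + i) :=
    Real.multipliable_of_summable_log (f := fun i => 1 + g (s + 1 + i))
      (fun i => hpos i) hlog_sum
  have hLnn : 0 ≤ ∑' i : ℕ, Real.log (1 + g (s + 1 + i)) := tsum_nonneg hlog_nn
  have hLle : (∑' i : ℕ, Real.log (1 + g (s + 1 + i)))
      ≤ ∑' i : ℕ, ((k - 1 : ℕ) : ℝ) * ρ (s + 1 + i) ^ 2 :=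
    Summable.tsum_le_tsum hlog_le hlog_sum hsumK
  have hP0 : (1 : ℝ) ≤ ∏' i : ℕ, (1 + g (s + 1 + i)) := by
    rw [hprod_eq]; exact Real.one_le_exp hLnn
  have hbound : (∑' ν : {ν : ℕ →₀ ℕ // (∀ j ≤ s, ν j = 0) ∧ (∀ j, ν j ≠ 1) ∧
          2 ≤ ν.sum (fun _ n => n) ∧ ν.sum (fun _ n => n) ≤ k},
        ν.1.prod fun j n => ρ j ^ n)
      ≤ -1 + ∏' i : ℕ, (1 + g (s + 1 + i)) := by
    apply tsum_le_of_sum_le' (by linarith)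
    intro u
    set F : Finset (ℕ →₀ ℕ) := u.image Subtype.val with hF
    set M : ℕ := F.sup (fun ν => ν.support.sup id) with hM
    have hsum_eq : ∑ x ∈ u, x.1.prod (fun j n => ρ j ^ n)
        = ∑ ν ∈ F, ν.prod (fun j n => ρ j ^ n) := by
      rw [hF, Finset.sum_image (fun x _ y _ h => Subtype.ext h)]
    have hFprop : ∀ ν ∈ F, (∀ j, ν j ≠ 0 → j ∈ Finset.Ioc s (s + M)) ∧
        (∀ j, ν j = 0 ∨ (2 ≤ ν j ∧ ν j ≤ k)) ∧ ν ≠ 0 := by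
      intro ν hν
      have hν' : ν ∈ u.image Subtype.val := by rw [← hF]; exact hν
      rw [Finset.mem_image] at hν'
      obtain ⟨x, hxu, rfl⟩ := hν'
      obtain ⟨h1, h2, h3, h4⟩ := x.2
      refine ⟨?_, ?_, ?_⟩
      · intro j hj
        rw [Finset.mem_Ioc]
        have hxF : x.1 ∈ F := by rw [hF]; exact Finset.mem_image_of_mem _ hxu
        have hjs : j ∈ x.1.support := Finsupp.mem_support_iff.mpr hj
        have hle1 : j ≤ x.1.support.sup id := Finset.le_sup (f := id) hjs
        have hle2 : x.1.support.sup id ≤ M := by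
          rw [hM]; exact Finset.le_sup (f := fun ν => ν.support.sup id) hxF
        constructor
        · by_contra hc
          push_neg at hc
          exact hj (h1 j (by omega))
        · omega
      · intro j
        by_cases hj : x.1 j = 0
        · exact Or.inl hj
        · right
          have hne1 := h2 j
          have hle : x.1 j ≤ x.1.sum (fun _ n => n) := by
            rw [Finsupp.sum]
            exact Finset.single_le_sum (f := fun i => x.1 i) (fun i _ => Nat.zero_le _)
              (Finsupp.mem_support_iff.mpr hj)
          exact ⟨by omega, by omega⟩
      · intro hc
        rw [hc] at h3
        simp [Finsupp.sum_zero_index] at h3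
    have hbox := box_sum_le ρ hnn k s M F hFprop
    have hIoc : ∀ j ∈ Finset.Ioc s (s + M),
        (∑ n ∈ insert 0 (Finset.Icc 2 k), ρ j ^ n) = 1 + g j := by
      intro j hj
      exact geom_aux k (ρ j) (hρ1 j (Finset.mem_Ioc.mp hj).1)
    rw [Finset.prod_congr rfl hIoc] at hbox
    have hIco : Finset.Ioc s (s + M) = Finset.Ico (s + 1) (s + M + 1) := by
      ext j; simp only [Finset.mem_Ioc, Finset.mem_Ico]; omega
    rw [hIco, Finset.prod_Ico_eq_prod_range] at hbox
    have hMM : s + M + 1 - (s + 1) = M := by omega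
    rw [hMM] at hbox
    have hple : (∏ i ∈ Finset.range M, (1 + g (s + 1 + i))) ≤ ∏' i : ℕ, (1 + g (s + 1 + i)) := by
      have he : (∏ i ∈ Finset.range M, (1 + g (s + 1 + i)))
          = Real.exp (∑ i ∈ Finset.range M, Real.log (1 + g (s + 1 + i))) := by
        rw [Real.exp_sum]
        exact Finset.prod_congr rfl fun i _ => (Real.exp_log (hpos i)).symm
      rw [he, hprod_eq]
      exact Real.exp_le_exp.2 (Summable.sum_le_tsum _ (fun i _ => hlog_nn i) hlog_sum)
    rw [hsum_eq]
    calc ∑ ν ∈ F, ν.prod (fun j n => ρ j ^ n)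
        ≤ (∏ i ∈ Finset.range M, (1 + g (s + 1 + i))) - 1 := hbox
      _ ≤ -1 + ∏' i : ℕ, (1 + g (s + 1 + i)) := by linarith
  simp only [hg] at hbound hprod_eq hLnn hLle
  exact ⟨hbound, hprod_eq, hLnn, hLle⟩


lemma sq_le_rpow (p : ℝ) (hp0 : 0 < p) (hp2 : p ≤ 2) (x : ℝ) (hx0 : 0 ≤ x) (hx1 : x < 1) :
    x ^ 2 ≤ x ^ p := by
  rcases eq_or_lt_of_le hx0 with h | h
  · rw [← h, Real.zero_rpow hp0.ne']; norm_num
  · have h2 : (x : ℝ) ^ (2 : ℕ) = x ^ ((2 : ℕ) : ℝ) := (Real.rpow_natCast x 2).symm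
    rw [h2]
    exact Real.rpow_le_rpow_of_exponent_ge h hx1.le (by push_cast; linarith)

lemma sq_split (p : ℝ) (x : ℝ) (hx : 0 ≤ x) : x ^ 2 = x ^ (2 - p) * x ^ p := by
  rw [← Real.rpow_add' hx (by norm_num : (2 - p) + p ≠ 0)]
  have h : (2 - p) + p = ((2 : ℕ) : ℝ) := by push_cast; ring
  rw [h, Real.rpow_natCast]

theorem dimension_truncation_tail_bound (p : ℝ) (hp0 : 0 < p) (hp1 : p < 1)
    (k : ℕ) (hk : 2 ≤ k)
    (ρ : ℕ → ℝ) (hnn : ∀ j, 0 ≤ ρ j) (hmono : ∀ i j, i ≤ j → ρ j ≤ ρ i)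
    (hsum : Summable fun j => ρ j ^ p) (hlt : ∀ᶠ j in atTop, ρ j < 1) :
    (∀ᶠ s : ℕ in atTop,
      (∑' ν : {ν : ℕ →₀ ℕ // (∀ j ≤ s, ν j = 0) ∧ (∀ j, ν j ≠ 1) ∧
            2 ≤ ν.sum (fun _ n => n) ∧ ν.sum (fun _ n => n) ≤ k},
          ν.1.prod fun j n => ρ j ^ n)
        ≤ -1 + ∏' j : ℕ,
            (1 + ρ (s + 1 + j) ^ 2 * (1 - ρ (s + 1 + j) ^ (k - 1)) / (1 - ρ (s + 1 + j))))
    ∧ (fun s : ℕ => -1 + ∏' j : ℕ,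
          (1 + ρ (s + 1 + j) ^ 2 * (1 - ρ (s + 1 + j) ^ (k - 1)) / (1 - ρ (s + 1 + j))))
        =O[atTop] fun s : ℕ => (s : ℝ) ^ (-2 / p + 1) := by
  obtain ⟨N, hN⟩ := eventually_atTop.mp hlt
  have hp2 : p ≤ 2 := by linarith
  have hsq0 : Summable fun n : ℕ => ρ (n + N) ^ 2 :=
    Summable.of_nonneg_of_le (fun n => sq_nonneg _)
      (fun n => sq_le_rpow p hp0 hp2 _ (hnn _) (hN (n + N) (by omega)))
      ((summable_nat_add_iff N).2 hsum)
  have hsqall : Summable fun j : ℕ => ρ j ^ 2 := (summable_nat_add_iff N).1 hsq0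
  have hsq : ∀ s : ℕ, Summable fun i => ρ (s + 1 + i) ^ 2 := fun s =>
    Summable.congr ((summable_nat_add_iff (s + 1)).2 hsqall) (fun n => by rw [add_comm])
  have key := fun (s : ℕ) (hs : N ≤ s) =>
    per_s k hk ρ hnn s (fun j hj => hN j (le_trans hs hj.le)) (hsq s)
  constructor
  · filter_upwards [eventually_ge_atTop N] with s hs
    exact (key s hs).1
  · have hS0 : 0 ≤ ∑' j : ℕ, ρ j ^ p := tsum_nonneg fun j => Real.rpow_nonneg (hnn j) p
    set S : ℝ := ∑' j : ℕ, ρ j ^ p with hSdef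
    set K : ℝ := ((k - 1 : ℕ) : ℝ) with hKdef
    have hK0 : (0 : ℝ) ≤ K := Nat.cast_nonneg _
    have hst : ∀ s : ℕ, ρ (s + 1) ^ p ≤ S / ((s : ℝ) + 2) := by
      intro s
      have h1 : ((s : ℝ) + 2) * ρ (s + 1) ^ p ≤ S := by
        have h2 : ∀ i ∈ Finset.range (s + 2), ρ (s + 1) ^ p ≤ ρ i ^ p := fun i hi =>
          Real.rpow_le_rpow (hnn _) (hmono i (s + 1) (by simp at hi; omega)) hp0.le
        calc ((s : ℝ) + 2) * ρ (s + 1) ^ p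
            = ∑ _i ∈ Finset.range (s + 2), ρ (s + 1) ^ p := by
              rw [Finset.sum_const, Finset.card_range, nsmul_eq_mul]; push_cast; ring
          _ ≤ ∑ i ∈ Finset.range (s + 2), ρ i ^ p := Finset.sum_le_sum h2
          _ ≤ S := Summable.sum_le_tsum _ (fun i _ => Real.rpow_nonneg (hnn i) p) hsum
      rw [le_div_iff₀ (by positivity)]
      linarith [h1]
    set q : ℝ := (2 - p) / p with hqdef
    have hq0 : 0 < q := div_pos (by linarith) hp0
    have hexpq : -2 / p + 1 = -q := by
      rw [hqdef]
      field_simp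
      ring
    have htail : ∀ s : ℕ, (∑' i : ℕ, K * ρ (s + 1 + i) ^ 2) ≤ K * (ρ (s + 1) ^ (2 - p) * S) := by
      intro s
      rw [tsum_mul_left]
      apply mul_le_mul_of_nonneg_left _ hK0
      have hterm : ∀ i : ℕ, ρ (s + 1 + i) ^ 2 ≤ ρ (s + 1) ^ (2 - p) * ρ (s + 1 + i) ^ p := by
        intro i
        rw [sq_split p (ρ (s + 1 + i)) (hnn _)]
        exact mul_le_mul_of_nonneg_right
          (Real.rpow_le_rpow (hnn _) (hmono (s + 1) (s + 1 + i) (by omega)) (by linarith))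
          (Real.rpow_nonneg (hnn _) p)
      have hsum2 : Summable fun i : ℕ => ρ (s + 1 + i) ^ p :=
        Summable.congr ((summable_nat_add_iff (s + 1)).2 hsum) (fun n => by rw [add_comm])
      have hsum1 : Summable fun i : ℕ => ρ (s + 1) ^ (2 - p) * ρ (s + 1 + i) ^ p :=
        hsum2.mul_left _
      calc (∑' i : ℕ, ρ (s + 1 + i) ^ 2)
          ≤ ∑' i : ℕ, ρ (s + 1) ^ (2 - p) * ρ (s + 1 + i) ^ p :=
            Summable.tsum_le_tsum hterm (hsq s) hsum1
        _ = ρ (s + 1) ^ (2 - p) * ∑' i : ℕ, ρ (s + 1 + i) ^ p := tsum_mul_left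
        _ ≤ ρ (s + 1) ^ (2 - p) * S := by
            apply mul_le_mul_of_nonneg_left _ (Real.rpow_nonneg (hnn _) _)
            exact Summable.tsum_le_tsum_of_inj (fun i => s + 1 + i) (fun a b h => Nat.add_left_cancel h)
              (fun c _ => Real.rpow_nonneg (hnn c) p) (fun i => le_refl _) hsum2 hsum
    have hρ2p : ∀ s : ℕ, 1 ≤ s → ρ (s + 1) ^ (2 - p) ≤ S ^ q * (s : ℝ) ^ (-q) := by
      intro s hs1
      have hs0 : (0 : ℝ) < (s : ℝ) := by exact_mod_cast hs1
      have h1 : ρ (s + 1) ^ (2 - p) = (ρ (s + 1) ^ p) ^ q := by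
        rw [← Real.rpow_mul (hnn _)]
        congr 1
        rw [hqdef]
        field_simp
      rw [h1]
      calc (ρ (s + 1) ^ p) ^ q ≤ (S / ((s : ℝ) + 2)) ^ q :=
            Real.rpow_le_rpow (Real.rpow_nonneg (hnn _) p) (hst s) hq0.le
        _ = S ^ q / ((s : ℝ) + 2) ^ q := Real.div_rpow hS0 (by positivity) q
        _ ≤ S ^ q / (s : ℝ) ^ q :=
            div_le_div_of_nonneg_left (Real.rpow_nonneg hS0 q) (Real.rpow_pos_of_pos hs0 q)
              (Real.rpow_le_rpow hs0.le (by linarith) hq0.le)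
        _ = S ^ q * (s : ℝ) ^ (-q) := by
            rw [Real.rpow_neg hs0.le, div_eq_mul_inv]
    rw [isBigO_iff]
    refine ⟨K * S * Real.exp (K * S) * S ^ q, ?_⟩
    filter_upwards [eventually_ge_atTop N, eventually_ge_atTop 1] with s hsN hs1
    obtain ⟨-, heq, hLnn, hLle⟩ := key s hsN
    set L : ℝ := ∑' j : ℕ, Real.log
      (1 + ρ (s + 1 + j) ^ 2 * (1 - ρ (s + 1 + j) ^ (k - 1)) / (1 - ρ (s + 1 + j))) with hLdef
    have hLle2 : L ≤ K * (ρ (s + 1) ^ (2 - p) * S) := le_trans hLle (htail s)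
    have hr0 : 0 ≤ ρ (s + 1) ^ (2 - p) := Real.rpow_nonneg (hnn _) _
    have hr1 : ρ (s + 1) ^ (2 - p) ≤ 1 :=
      Real.rpow_le_one (hnn _) (hN (s + 1) (by omega)).le (by linarith)
    have hLb : L ≤ K * S := by
      nlinarith [mul_nonneg (mul_nonneg hK0 hS0) (by linarith : (0:ℝ) ≤ 1 - ρ (s + 1) ^ (2 - p))]
    have h2 : Real.exp L - 1 ≤ (K * (ρ (s + 1) ^ (2 - p) * S)) * Real.exp (K * S) := by
      have h3 := exp_sub_one_le L hLnn
      have h4 : L * Real.exp L ≤ (K * (ρ (s + 1) ^ (2 - p) * S)) * Real.exp (K * S) := by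
        apply mul_le_mul hLle2 (Real.exp_le_exp.2 hLb) (Real.exp_pos L).le
        positivity
      linarith
    have h5 : ρ (s + 1) ^ (2 - p) ≤ S ^ q * (s : ℝ) ^ (-q) := hρ2p s hs1
    have hfin : Real.exp L - 1 ≤ (K * S * Real.exp (K * S) * S ^ q) * (s : ℝ) ^ (-q) := by
      have hc0 : (0 : ℝ) ≤ K * S * Real.exp (K * S) := by positivity
      calc Real.exp L - 1 ≤ (K * (ρ (s + 1) ^ (2 - p) * S)) * Real.exp (K * S) := h2
        _ = (K * S * Real.exp (K * S)) * ρ (s + 1) ^ (2 - p) := by ring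
        _ ≤ (K * S * Real.exp (K * S)) * (S ^ q * (s : ℝ) ^ (-q)) :=
            mul_le_mul_of_nonneg_left h5 hc0
        _ = (K * S * Real.exp (K * S) * S ^ q) * (s : ℝ) ^ (-q) := by ring
    have hnn2 : (0 : ℝ) ≤ -1 + ∏' j : ℕ,
        (1 + ρ (s + 1 + j) ^ 2 * (1 - ρ (s + 1 + j) ^ (k - 1)) / (1 - ρ (s + 1 + j))) := by
      rw [heq]
      linarith [Real.one_le_exp hLnn]
    rw [Real.norm_eq_abs, Real.norm_eq_abs, abs_of_nonneg hnn2,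
      abs_of_nonneg (Real.rpow_nonneg (Nat.cast_nonneg s) _), heq, hexpq]
    linarith [hfin]
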